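/- Let A be a matrix over ℤ/2 and suppose A is reduced by the standard left-to-right column reduction (repeatedly adding an earlier column with the same pivot), yielding reduced matrix R. Then every column that is ever added to another column during the reduction is itself already fully reduced, i.e. equals the corresponding column of R. -/

import Mathlib

/-- The pivot of a column vector over `ℤ/2`: the largest row index with a
nonzero entry (`⊥` for the zero column). -/
def pivot {r : ℕ} (v : Fin r → ZMod 2) : WithBot (Fin r) :=
  (Finset.univ.filter fun i => v i ≠ 0).max

/-- One column operation: add column `mv.1` to column `mv.2`.  A matrix is
represented by its family of columns. -/
def applyMove {m r : ℕ} (C : Fin m → Fin r → ZMod 2) (mv : Fin m × Fin m) :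
    Fin m → Fin r → ZMod 2 :=
  Function.update C mv.2 (C mv.2 + C mv.1)

/-- A matrix (given by its columns) is reduced if its nonzero columns have
pairwise distinct pivots. -/
def Reduced {m r : ℕ} (C : Fin m → Fin r → ZMod 2) : Prop :=
  ∀ j j', j ≠ j' → C j ≠ 0 → C j' ≠ 0 → pivot (C j) ≠ pivot (C j')

/-- A valid execution of the standard left-to-right column reduction from `C`
to `R`: each move adds an earlier column `i` with the same (nonzero) pivot to a
later column `j`, and the sequence of modified columns is processed left to
right (all later moves modify columns `≥ j`). -/
inductive ValidTrace {m r : ℕ} :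
    (Fin m → Fin r → ZMod 2) → List (Fin m × Fin m) →
      (Fin m → Fin r → ZMod 2) → Prop
  | nil (C : Fin m → Fin r → ZMod 2) : ValidTrace C [] C
  | cons {C R : Fin m → Fin r → ZMod 2} {i j : Fin m} {L : List (Fin m × Fin m)}
      (hlt : i < j)
      (hpiv : pivot (C i) = pivot (C j))
      (hne : pivot (C j) ≠ ⊥)
      (hmono : ∀ mv ∈ L, j ≤ mv.2)
      (htail : ValidTrace (applyMove C (i, j)) L R) :
      ValidTrace C ((i, j) :: L) R

lemma foldl_apply_of_ne {m r : ℕ} (C : Fin m → Fin r → ZMod 2)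
    (L : List (Fin m × Fin m)) (i : Fin m) (h : ∀ mv ∈ L, mv.2 ≠ i) :
    List.foldl applyMove C L i = C i := by
  induction L generalizing C with
  | nil => rfl
  | cons hd tl ih =>
    rw [List.foldl_cons, ih _ (fun mv hm => h mv (List.mem_cons_of_mem _ hm))]
    exact Function.update_of_ne (Ne.symm (h hd List.mem_cons_self)) _ _

lemma trace_foldl {m r : ℕ} {C R : Fin m → Fin r → ZMod 2}
    {L : List (Fin m × Fin m)} (h : ValidTrace C L R) :
    List.foldl applyMove C L = R := by
  induction h with
  | nil => rfl
  | cons hlt hpiv hne hmono htail ih => simpa using ih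

/-- In the standard left-to-right column reduction of a matrix `A` over `ℤ/2`
yielding a reduced matrix `R`, every column that is ever added to another
column is itself already fully reduced: at the moment the addition
`c_j ← c_j + c_i` happens, column `i` equals the corresponding column of
`R`. -/
theorem added_column_is_reduced {m r : ℕ} (A : Fin m → Fin r → ZMod 2)
    (L : List (Fin m × Fin m)) (R : Fin m → Fin r → ZMod 2)
    (htrace : ValidTrace A L R) (hred : Reduced R)
    (L1 L2 : List (Fin m × Fin m)) (i j : Fin m)
    (hsplit : L = L1 ++ (i, j) :: L2) :
    List.foldl applyMove A L1 i = R i := by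
  clear hred
  induction L1 generalizing A L with
  | nil =>
    subst hsplit
    cases htrace with
    | cons hlt hpiv hne hmono htail =>
      rw [← trace_foldl htail, List.foldl_nil,
        foldl_apply_of_ne _ _ _
          (fun mv hm => Fin.ne_of_gt (lt_of_lt_of_le hlt (hmono mv hm)))]
      exact (Function.update_of_ne (Fin.ne_of_lt hlt) _ _).symm
  | cons hd tl ih =>
    subst hsplit
    cases htrace with
    | cons hlt hpiv hne hmono htail =>
      rw [List.foldl_cons]
      exact ih _ _ htail rfl
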